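/- arXiv:1705.08559 — 4 statements merged into one kernel-verified Lean document; each statement's English description precedes it below -/
import Mathlib

section
/- For a finite partition α of finite entropy and a countably-generated σ-subalgebra 𝒜, H(α | 𝒜) equals the integral over X of the entropy of α with respect to the conditional measures μ|_x^𝒜, i.e. H(α | 𝒜) = ∫_X H_{μ|_x^𝒜}(α) dμ(x). -/
open MeasureTheory Real Filter Topology

def IsPartition {X ι : Type*} [MeasurableSpace X] (μ : Measure X) (α : ι → Set X) : Prop :=
  (∀ i, MeasurableSet (α i)) ∧ Pairwise (Function.onFun Disjoint α) ∧ μ (⋃ i, α i)ᶜ = 0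

noncomputable def shannonEntropy {X ι : Type*} [MeasurableSpace X] (μ : Measure X)
    (α : ι → Set X) : ℝ :=
  ∑' i, Real.negMulLog (μ (α i)).toReal

def joinPart {X ι κ : Type*} (α : ι → Set X) (β : κ → Set X) : ι × κ → Set X :=
  fun p => α p.1 ∩ β p.2

/-- `H(α | β) = H(α ∨ β) - H(β)`. -/
noncomputable def condShannonEntropy {X ι κ : Type*} [MeasurableSpace X] (μ : Measure X)
    (α : ι → Set X) (β : κ → Set X) : ℝ :=
  shannonEntropy μ (joinPart α β) - shannonEntropy μ β

/-- `H(α | 𝒜)`: the infimum of `H(α | β)` over countable `𝒜`-measurable partitions `β`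
of finite Shannon entropy. -/
noncomputable def condEntropyAlg {X ι : Type*} [m : MeasurableSpace X] (μ : Measure X)
    (α : ι → Set X) (𝒜 : MeasurableSpace X) : ℝ :=
  sInf {r : ℝ | ∃ β : ℕ → Set X, (∀ i, MeasurableSet[𝒜] (β i)) ∧
    Pairwise (Function.onFun Disjoint β) ∧ μ (⋃ i, β i)ᶜ = 0 ∧
    (Summable fun i => Real.negMulLog (μ (β i)).toReal) ∧
    r = @condShannonEntropy X ι ℕ m μ α β}

open MeasureTheory Real Filter Topology Set

lemma negMulLog_le_exp_neg_one {x : ℝ} (hx : 0 ≤ x) : Real.negMulLog x ≤ Real.exp (-1) := by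
  rcases eq_or_lt_of_le hx with h | h
  · simp [← h, Real.negMulLog]; positivity
  · have h1 : Real.log (Real.exp (-1) / x) ≤ Real.exp (-1) / x - 1 :=
      Real.log_le_sub_one_of_pos (by positivity)
    rw [Real.log_div (Real.exp_ne_zero _) (ne_of_gt h), Real.log_exp] at h1
    have h2 : x * (-Real.log x) ≤ x * (Real.exp (-1) / x) :=
      mul_le_mul_of_nonneg_left (by linarith) hx
    rw [mul_div_cancel₀ _ (ne_of_gt h)] at h2
    calc Real.negMulLog x = x * (-Real.log x) := by rw [Real.negMulLog]; ring
    _ ≤ Real.exp (-1) := h2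

lemma negMulLog_le_of_le {a b : ℝ} (ha : 0 ≤ a) (hab : a ≤ b) (hb : b ≤ 1) :
    Real.negMulLog a ≤ Real.exp (-1) * b + Real.negMulLog b := by
  rcases eq_or_lt_of_le (ha.trans hab) with h | h
  · have hb0 : b ≥ 0 := ha.trans hab
    have : a = 0 := le_antisymm (h ▸ hab) ha
    rw [this, Real.negMulLog_zero]
    have := Real.negMulLog_nonneg hb0 hb
    positivity
  · have hbne : b ≠ 0 := ne_of_gt h
    have key : a = b * (a / b) := by field_simp
    rw [key, Real.negMulLog_mul]
    have h1 : b * Real.negMulLog (a / b) ≤ b * Real.exp (-1) :=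
      mul_le_mul_of_nonneg_left (negMulLog_le_exp_neg_one (by positivity)) (le_of_lt h)
    have h2 : a / b * Real.negMulLog b ≤ 1 * Real.negMulLog b := by
      apply mul_le_mul_of_nonneg_right _ (Real.negMulLog_nonneg (le_of_lt h) hb)
      rw [div_le_one h]; exact hab
    nlinarith [h1, h2]

-- per-atom algebraic identity
lemma sum_negMulLog_sub {n : ℕ} {a : Fin n → ℝ} {c : ℝ} (hc : 0 < c)
    (hac : ∑ i, a i = c) :
    ∑ i, Real.negMulLog (a i) - Real.negMulLog c = c * ∑ i, Real.negMulLog (a i / c) := by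
  have key : ∀ i : Fin n, Real.negMulLog (a i)
      = a i / c * Real.negMulLog c + c * Real.negMulLog (a i / c) := by
    intro i
    have : a i = c * (a i / c) := by field_simp
    calc Real.negMulLog (a i) = Real.negMulLog (c * (a i / c)) := by rw [← this]
    _ = _ := Real.negMulLog_mul _ _
  rw [Finset.sum_congr rfl (fun i _ => key i), Finset.sum_add_distrib, ← Finset.sum_mul,
    ← Finset.sum_div, hac, div_self (ne_of_gt hc), one_mul, ← Finset.mul_sum]
  ring

lemma subset_or_disjoint_of_generateFrom {X : Type*} {P : Set (Set X)}
    (hd : ∀ u ∈ P, ∀ v ∈ P, u ≠ v → Disjoint u v) {A : Set X}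
    (hA : MeasurableSet[MeasurableSpace.generateFrom P] A) :
    ∀ u ∈ P, u ⊆ A ∨ Disjoint u A := by
  refine MeasurableSpace.generateFrom_induction P
    (fun A _ => ∀ u ∈ P, u ⊆ A ∨ Disjoint u A) ?_ ?_ ?_ ?_ A hA
  · intro t ht _ u hu
    rcases eq_or_ne u t with rfl | hne
    · exact Or.inl subset_rfl
    · exact Or.inr (hd u hu t ht hne)
  · intro u _; exact Or.inr disjoint_bot_right
  · intro t _ ht u hu
    rcases ht u hu with h | h
    · exact Or.inr (disjoint_compl_right.mono_left h)
    · exact Or.inl (Set.subset_compl_iff_disjoint_right.2 h)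
  · intro f _ hf u hu
    by_cases h : ∃ i, u ⊆ f i
    · obtain ⟨i, hi⟩ := h
      exact Or.inl (hi.trans (Set.subset_iUnion f i))
    · push_neg at h
      refine Or.inr (Set.disjoint_iUnion_right.2 fun i => ?_)
      rcases hf i u hu with h' | h'
      · exact absurd h' (h i)
      · exact h'

lemma eqOn_of_measurable_generateFrom {X : Type*} {P : Set (Set X)}
    (hd : ∀ u ∈ P, ∀ v ∈ P, u ≠ v → Disjoint u v) {f : X → ℝ}
    (hf : Measurable[MeasurableSpace.generateFrom P] f) {u : Set X} (hu : u ∈ P)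
    {x y : X} (hx : x ∈ u) (hy : y ∈ u) : f x = f y := by
  have hA : MeasurableSet[MeasurableSpace.generateFrom P] (f ⁻¹' {f x}) :=
    hf (measurableSet_singleton _)
  rcases subset_or_disjoint_of_generateFrom hd hA u hu with h | h
  · exact (h hy).symm
  · exact absurd (Set.mem_preimage.2 (Set.mem_singleton _)) (Set.disjoint_left.1 h hx)

open MeasureTheory Real Filter Topology Set
open scoped ENNReal

section Dec

variable {X : Type*} [m : MeasurableSpace X] (μ : Measure X) [IsProbabilityMeasure μ]

lemma toReal_le_one (s : Set X) : (μ s).toReal ≤ 1 := by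
  have h := prob_le_one (μ := μ) (s := s)
  calc (μ s).toReal ≤ (1 : ℝ≥0∞).toReal := ENNReal.toReal_mono ENNReal.one_ne_top h
  _ = 1 := by simp

lemma toReal_inter_le {s t : Set X} : (μ (s ∩ t)).toReal ≤ (μ t).toReal :=
  ENNReal.toReal_mono (measure_ne_top μ t) (measure_mono Set.inter_subset_right)

variable {n : ℕ} {α : Fin n → Set X} (hα : IsPartition μ α)
  {β : ℕ → Set X} (hβm : ∀ k, MeasurableSet (β k))
  (hβd : Pairwise (Function.onFun Disjoint β)) (hβc : μ (⋃ k, β k)ᶜ = 0)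
  (hβfin : Summable fun k => Real.negMulLog (μ (β k)).toReal)

include hβm hβd in
lemma summable_c : Summable (fun k => (μ (β k)).toReal) := by
  refine ENNReal.summable_toReal ?_
  rw [← measure_iUnion hβd hβm]
  exact measure_ne_top μ _

include hβm hβd hβfin in
lemma summable_inner :
    Summable (fun k => ∑ i, Real.negMulLog (μ (α i ∩ β k)).toReal) := by
  refine Summable.of_nonneg_of_le (fun k => ?_) (fun k => ?_)
    (((((summable_c μ hβm hβd).mul_left (Real.exp (-1))).add hβfin)).mul_left (n : ℝ))
  · exact Finset.sum_nonneg fun i _ => Real.negMulLog_nonneg ENNReal.toReal_nonneg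
      ((toReal_inter_le μ).trans (toReal_le_one μ _))
  · calc ∑ i, Real.negMulLog (μ (α i ∩ β k)).toReal
        ≤ ∑ _i : Fin n, (Real.exp (-1) * (μ (β k)).toReal + Real.negMulLog (μ (β k)).toReal) := by
          refine Finset.sum_le_sum fun i _ => ?_
          exact negMulLog_le_of_le ENNReal.toReal_nonneg (toReal_inter_le μ) (toReal_le_one μ _)
    _ = (n : ℝ) * (Real.exp (-1) * (μ (β k)).toReal + Real.negMulLog (μ (β k)).toReal) := by
          rw [Finset.sum_const, Finset.card_univ, Fintype.card_fin, nsmul_eq_mul]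

include hβm hβd hβfin in
lemma summable_join :
    Summable (fun p : Fin n × ℕ => Real.negMulLog (μ (α p.1 ∩ β p.2)).toReal) := by
  have hf' : Summable (fun q : ℕ × Fin n => Real.negMulLog (μ (α q.2 ∩ β q.1)).toReal) := by
    refine (summable_prod_of_nonneg ?_).2 ⟨fun k => summable_of_finite_support (Set.toFinite _), ?_⟩
    · intro q
      exact Real.negMulLog_nonneg ENNReal.toReal_nonneg
        ((toReal_inter_le μ).trans (toReal_le_one μ _))
    · simp_rw [tsum_fintype]
      exact summable_inner μ hβm hβd hβfin
  exact (Equiv.prodComm (Fin n) ℕ).summable_iff.2 hf'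

include hβm hβd hβfin in
lemma join_entropy_eq :
    shannonEntropy μ (joinPart α β) = ∑' k, ∑ i, Real.negMulLog (μ (α i ∩ β k)).toReal := by
  have hf' : Summable (fun q : ℕ × Fin n => Real.negMulLog (μ (α q.2 ∩ β q.1)).toReal) :=
    (Equiv.prodComm (Fin n) ℕ).summable_iff.1 (summable_join μ hβm hβd hβfin)
  calc shannonEntropy μ (joinPart α β)
      = ∑' p : Fin n × ℕ, Real.negMulLog (μ (α p.1 ∩ β p.2)).toReal := rfl
    _ = ∑' q : ℕ × Fin n, Real.negMulLog (μ (α q.2 ∩ β q.1)).toReal :=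
        (Equiv.prodComm (Fin n) ℕ).tsum_eq
          (fun q : ℕ × Fin n => Real.negMulLog (μ (α q.2 ∩ β q.1)).toReal)
    _ = ∑' k, ∑' i : Fin n, Real.negMulLog (μ (α i ∩ β k)).toReal :=
        hf'.tsum_prod' (fun k => summable_of_finite_support (Set.toFinite _))
    _ = ∑' k, ∑ i, Real.negMulLog (μ (α i ∩ β k)).toReal := by
        congr 1; ext k; exact tsum_fintype _

include hβm hβd hβfin in
lemma condShannonEntropy_eq :
    condShannonEntropy μ α β = ∑' k, (∑ i, Real.negMulLog (μ (α i ∩ β k)).toReal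
      - Real.negMulLog (μ (β k)).toReal) := by
  rw [condShannonEntropy, join_entropy_eq μ hβm hβd hβfin, shannonEntropy,
    ← (summable_inner μ hβm hβd hβfin).tsum_sub hβfin]

include hα in
lemma sum_inter_eq {B : Set X} (hB : MeasurableSet B) :
    ∑ i, (μ (α i ∩ B)).toReal = (μ B).toReal := by
  have h1 : μ (⋃ i, α i ∩ B) = μ B := by
    rw [← Set.iUnion_inter, Set.inter_comm]
    exact measure_inter_conull hα.2.2
  have h2 : μ (⋃ i, α i ∩ B) = ∑' i, μ (α i ∩ B) :=
    measure_iUnion (fun i j hij => ((hα.2.1 hij).inter_right _).inter_left _)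
      (fun i => (hα.1 i).inter hB)
  have h3 : ∑' i, μ (α i ∩ B) = ∑ i, μ (α i ∩ B) := tsum_fintype _
  rw [← ENNReal.toReal_sum (fun i _ => measure_ne_top μ _), ← h3, ← h2, h1]

end Dec
section Main

variable {X : Type*} (𝒜 : MeasurableSpace X) [m : MeasurableSpace X] (μ : Measure X)
  [IsProbabilityMeasure μ]

noncomputable def condFun {n : ℕ} (α : Fin n → Set X) (i : Fin n) : X → ℝ :=
  μ[(α i).indicator (fun _ => (1:ℝ)) | 𝒜]

noncomputable def entFun {n : ℕ} (α : Fin n → Set X) : X → ℝ :=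
  fun x => ∑ i, Real.negMulLog (condFun 𝒜 μ α i x)

variable {𝒜} (h𝒜 : 𝒜 ≤ m) {n : ℕ} {α : Fin n → Set X} (hα : IsPartition μ α)

include h𝒜 hα in
lemma condFun_mem : ∀ i, ∀ᵐ x ∂μ, condFun 𝒜 μ α i x ∈ Set.Icc (0:ℝ) 1 := by
  intro i
  haveI : SigmaFinite (μ.trim h𝒜) := by infer_instance
  have h0 : 0 ≤ᵐ[μ] condFun 𝒜 μ α i :=
    condExp_nonneg (Filter.Eventually.of_forall fun x => Set.indicator_nonneg (by simp) x)
  have h1 : condFun 𝒜 μ α i ≤ᵐ[μ] fun _ => (1:ℝ) := by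
    have hmono : condFun 𝒜 μ α i ≤ᵐ[μ] μ[(fun _ => (1:ℝ)) | 𝒜] := by
      refine condExp_mono ((integrable_const (1:ℝ)).indicator (hα.1 i)) (integrable_const _)
        (Filter.Eventually.of_forall fun x => ?_)
      classical
      by_cases hx : x ∈ α i <;> simp [Set.indicator_apply, hx]
    have hconst : μ[(fun _ => (1:ℝ)) | 𝒜] = fun _ => (1:ℝ) := condExp_const h𝒜 _
    rwa [hconst] at hmono
  filter_upwards [h0, h1] with x hx0 hx1
  exact ⟨hx0, hx1⟩

lemma condFun_aesm (i : Fin n) : AEStronglyMeasurable (condFun 𝒜 μ α i) μ := by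
  by_cases h𝒜 : 𝒜 ≤ m
  · exact (stronglyMeasurable_condExp.mono h𝒜).aestronglyMeasurable
  · rw [condFun, condExp_of_not_le h𝒜]; exact aestronglyMeasurable_const

include h𝒜 hα in
lemma negMulLog_condFun_integrable (i : Fin n) :
    Integrable (fun x => Real.negMulLog (condFun 𝒜 μ α i x)) μ := by
  refine Integrable.mono' (integrable_const (Real.exp (-1)))
    (Real.continuous_negMulLog.comp_aestronglyMeasurable (condFun_aesm μ i)) ?_
  filter_upwards [condFun_mem μ h𝒜 hα i] with x hx
  rw [Real.norm_eq_abs, abs_of_nonneg (Real.negMulLog_nonneg hx.1 hx.2)]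
  exact negMulLog_le_exp_neg_one hx.1

include h𝒜 hα in
lemma entFun_integrable : Integrable (entFun 𝒜 μ α) μ :=
  integrable_finset_sum _ fun i _ => negMulLog_condFun_integrable μ h𝒜 hα i

include h𝒜 hα in
lemma setIntegral_condFun {B : Set X} (hB : MeasurableSet[𝒜] B) (i : Fin n) :
    ∫ x in B, condFun 𝒜 μ α i x ∂μ = (μ (α i ∩ B)).toReal := by
  haveI : SigmaFinite (μ.trim h𝒜) := by infer_instance
  rw [condFun, setIntegral_condExp h𝒜 ((integrable_const (1:ℝ)).indicator (hα.1 i)) hB]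
  rw [integral_indicator_const (1:ℝ) (hα.1 i), measureReal_restrict_apply (hα.1 i), measureReal_def]
  simp [Set.inter_comm]

include h𝒜 hα in
lemma atom_jensen {B : Set X} (hB : MeasurableSet[𝒜] B) :
    ∫ x in B, entFun 𝒜 μ α x ∂μ
      ≤ ∑ i, Real.negMulLog (μ (α i ∩ B)).toReal - Real.negMulLog (μ B).toReal := by
  by_cases hBz : μ B = 0
  · have h1 : ∀ i : Fin n, μ (α i ∩ B) = 0 :=
      fun i => measure_mono_null Set.inter_subset_right hBz
    simp only [hBz, h1, ENNReal.toReal_zero, Real.negMulLog_zero, Finset.sum_const_zero, sub_zero]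
    rw [Measure.restrict_eq_zero.2 hBz, integral_zero_measure]
  · set c : ℝ := (μ B).toReal with hc_def
    have hc : 0 < c := ENNReal.toReal_pos hBz (measure_ne_top μ B)
    set a : Fin n → ℝ := fun i => (μ (α i ∩ B)).toReal with ha_def
    have hac : ∑ i, a i = c := sum_inter_eq μ hα (h𝒜 _ hB)
    set μ' := μ.restrict B with hμ'_def
    haveI : NeZero μ' := by
      refine ⟨fun h => hBz ?_⟩
      have h2 : μ' Set.univ = 0 := by rw [h]; rfl
      rwa [hμ'_def, Measure.restrict_apply_univ] at h2
    have key : ∀ i : Fin n, ∫ x in B, Real.negMulLog (condFun 𝒜 μ α i x) ∂μ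
        ≤ c * Real.negMulLog (a i / c) := by
      intro i
      have hJ : (⨍ x, Real.negMulLog (condFun 𝒜 μ α i x) ∂μ')
          ≤ Real.negMulLog (⨍ x, condFun 𝒜 μ α i x ∂μ') := by
        refine ConcaveOn.le_map_average Real.concaveOn_negMulLog
          Real.continuous_negMulLog.continuousOn isClosed_Ici ?_ integrable_condExp.restrict
          ((negMulLog_condFun_integrable μ h𝒜 hα i).restrict)
        exact ae_restrict_of_ae ((condFun_mem μ h𝒜 hα i).mono fun x hx => hx.1)
      have havg : (⨍ x, condFun 𝒜 μ α i x ∂μ') = a i / c := by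
        rw [average_eq, measureReal_restrict_apply_univ, measureReal_def, setIntegral_condFun μ h𝒜 hα hB i, smul_eq_mul,
          ← hc_def, inv_mul_eq_div]
      have havg2 : (⨍ x, Real.negMulLog (condFun 𝒜 μ α i x) ∂μ')
          = c⁻¹ * ∫ x in B, Real.negMulLog (condFun 𝒜 μ α i x) ∂μ := by
        rw [average_eq, measureReal_restrict_apply_univ, measureReal_def, smul_eq_mul, ← hc_def]
      rw [havg, havg2] at hJ
      calc ∫ x in B, Real.negMulLog (condFun 𝒜 μ α i x) ∂μ
          = c * (c⁻¹ * ∫ x in B, Real.negMulLog (condFun 𝒜 μ α i x) ∂μ) := by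
            field_simp
        _ ≤ c * Real.negMulLog (a i / c) := mul_le_mul_of_nonneg_left hJ hc.le
    calc ∫ x in B, entFun 𝒜 μ α x ∂μ
        = ∑ i, ∫ x in B, Real.negMulLog (condFun 𝒜 μ α i x) ∂μ :=
          integral_finset_sum _ fun i _ => (negMulLog_condFun_integrable μ h𝒜 hα i).restrict
      _ ≤ ∑ i, c * Real.negMulLog (a i / c) := Finset.sum_le_sum fun i _ => key i
      _ = c * ∑ i, Real.negMulLog (a i / c) := by rw [Finset.mul_sum]
      _ = ∑ i, Real.negMulLog (a i) - Real.negMulLog c := (sum_negMulLog_sub hc hac).symm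


include h𝒜 hα in
lemma integral_entFun_eq_tsum {β : ℕ → Set X} (hβm : ∀ k, MeasurableSet (β k))
    (hβd : Pairwise (Function.onFun Disjoint β)) (hβc : μ (⋃ k, β k)ᶜ = 0) :
    HasSum (fun k => ∫ x in β k, entFun 𝒜 μ α x ∂μ) (∫ x, entFun 𝒜 μ α x ∂μ) := by
  have hs := hasSum_integral_iUnion hβm hβd (entFun_integrable μ h𝒜 hα).integrableOn
  have h2 : μ.restrict (⋃ k, β k) = μ := by
    rw [Measure.restrict_congr_set (MeasureTheory.ae_eq_univ.2 hβc), Measure.restrict_univ]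
  rwa [h2] at hs

include h𝒜 hα in
lemma integral_entFun_le {β : ℕ → Set X} (hβmeas : ∀ k, MeasurableSet[𝒜] (β k))
    (hβd : Pairwise (Function.onFun Disjoint β)) (hβc : μ (⋃ k, β k)ᶜ = 0)
    (hβfin : Summable fun k => Real.negMulLog (μ (β k)).toReal) :
    ∫ x, entFun 𝒜 μ α x ∂μ ≤ condShannonEntropy μ α β := by
  have hβm : ∀ k, MeasurableSet (β k) := fun k => h𝒜 _ (hβmeas k)
  rw [condShannonEntropy_eq μ hβm hβd hβfin]
  have hs := integral_entFun_eq_tsum μ h𝒜 hα hβm hβd hβc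
  rw [← hs.tsum_eq]
  exact Summable.tsum_le_tsum (fun k => atom_jensen μ h𝒜 hα (hβmeas k)) hs.summable
    ((summable_inner μ hβm hβd hβfin).sub hβfin)
omit [IsProbabilityMeasure μ] in
lemma setIntegral_indicator_one {A B : Set X} (hA : MeasurableSet A) :
    ∫ x in B, A.indicator (fun _ => (1:ℝ)) x ∂μ = (μ (A ∩ B)).toReal := by
  rw [integral_indicator_const (1:ℝ) hA, measureReal_restrict_apply hA, measureReal_def, smul_eq_mul, mul_one]

lemma condexp_const_on_atom {P : Set (Set X)} (hPd : ∀ u ∈ P, ∀ v ∈ P, u ≠ v → Disjoint u v)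
    (hPm : ∀ u ∈ P, MeasurableSet u) {u : Set X} (hu : u ∈ P) (huz : μ u ≠ 0)
    {f : X → ℝ} (hf : Integrable f μ) {x : X} (hx : x ∈ u) :
    (μ[f|MeasurableSpace.generateFrom P]) x = (∫ y in u, f y ∂μ) / (μ u).toReal := by
  have h𝒜' : MeasurableSpace.generateFrom P ≤ m := MeasurableSpace.generateFrom_le hPm
  haveI : SigmaFinite (μ.trim h𝒜') := by infer_instance
  have hconst : Set.EqOn (μ[f|MeasurableSpace.generateFrom P])
      (fun _ => (μ[f|MeasurableSpace.generateFrom P]) x) u := fun y hy =>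
    eqOn_of_measurable_generateFrom hPd stronglyMeasurable_condExp.measurable hu hy hx
  have hint : ∫ y in u, (μ[f|MeasurableSpace.generateFrom P]) y ∂μ
      = (μ u).toReal * (μ[f|MeasurableSpace.generateFrom P]) x := by
    rw [setIntegral_congr_fun (hPm u hu) hconst, setIntegral_const, measureReal_def, smul_eq_mul]
  have hcond : ∫ y in u, (μ[f|MeasurableSpace.generateFrom P]) y ∂μ = ∫ y in u, f y ∂μ :=
    setIntegral_condExp h𝒜' hf (MeasurableSpace.measurableSet_generateFrom hu)
  rw [hint] at hcond
  rw [← hcond]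
  field_simp [ENNReal.toReal_ne_zero.2 ⟨huz, measure_ne_top μ u⟩]

include hα in
lemma condShannonEntropy_eq_integral_entFun {β : ℕ → Set X} (hβm : ∀ k, MeasurableSet (β k))
    (hβd : Pairwise (Function.onFun Disjoint β)) (hβc : μ (⋃ k, β k)ᶜ = 0)
    (hβfin : Summable fun k => Real.negMulLog (μ (β k)).toReal) :
    condShannonEntropy μ α β
      = ∫ x, entFun (MeasurableSpace.generateFrom (Set.range β)) μ α x ∂μ := by
  have h𝒜' : MeasurableSpace.generateFrom (Set.range β) ≤ m :=
    MeasurableSpace.generateFrom_le (by rintro s ⟨k, rfl⟩; exact hβm k)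
  have hPd : ∀ u ∈ Set.range β, ∀ v ∈ Set.range β, u ≠ v → Disjoint u v := by
    rintro u ⟨i, rfl⟩ v ⟨j, rfl⟩ hne
    exact hβd (fun h => hne (h ▸ rfl))
  rw [condShannonEntropy_eq μ hβm hβd hβfin,
    ← (integral_entFun_eq_tsum μ h𝒜' hα hβm hβd hβc).tsum_eq]
  refine tsum_congr fun k => ?_
  by_cases hkz : μ (β k) = 0
  · have h1 : ∀ i : Fin n, μ (α i ∩ β k) = 0 :=
      fun i => measure_mono_null Set.inter_subset_right hkz
    simp only [hkz, h1, ENNReal.toReal_zero, Real.negMulLog_zero, Finset.sum_const_zero, sub_zero]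
    rw [Measure.restrict_eq_zero.2 hkz, integral_zero_measure]
  · set c : ℝ := (μ (β k)).toReal with hc_def
    have hc : 0 < c := ENNReal.toReal_pos hkz (measure_ne_top μ _)
    set a : Fin n → ℝ := fun i => (μ (α i ∩ β k)).toReal with ha_def
    have hac : ∑ i, a i = c := sum_inter_eq μ hα (hβm k)
    have hval : ∀ (i : Fin n) (x : X), x ∈ β k → condFun (MeasurableSpace.generateFrom (Set.range β)) μ α i x = a i / c := by
      intro i x hx
      rw [condFun, condexp_const_on_atom μ hPd (by rintro s ⟨j, rfl⟩; exact hβm j)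
        ⟨k, rfl⟩ hkz ((integrable_const (1:ℝ)).indicator (hα.1 i)) hx,
        setIntegral_indicator_one μ (hα.1 i)]
    have heqon : Set.EqOn (entFun (MeasurableSpace.generateFrom (Set.range β)) μ α) (fun _ => ∑ i, Real.negMulLog (a i / c)) (β k) := by
      intro x hx
      exact Finset.sum_congr rfl fun i _ => by rw [hval i x hx]
    rw [setIntegral_congr_fun (hβm k) heqon, setIntegral_const, measureReal_def, smul_eq_mul, ← hc_def,
      sum_negMulLog_sub hc hac]
omit [IsProbabilityMeasure μ] h𝒜 hα in
lemma exists_enum {P : Set (Set X)} (hP : P.Finite)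
    (hPd : ∀ u ∈ P, ∀ v ∈ P, u ≠ v → Disjoint u v) :
    ∃ β : ℕ → Set X, Set.range β = insert ∅ P ∧ Pairwise (Function.onFun Disjoint β) ∧
      (⋃ k, β k) = ⋃₀ P ∧ ∃ N : ℕ, ∀ k, N ≤ k → β k = ∅ := by
  classical
  set L : List (Set X) := hP.toFinset.toList with hL_def
  have hLmem : ∀ s, s ∈ L ↔ s ∈ P := by
    intro s; rw [hL_def, Finset.mem_toList, Set.Finite.mem_toFinset]
  have hLnd : L.Nodup := Finset.nodup_toList _
  refine ⟨fun k => L.getD k ∅, ?_, ?_, ?_, L.length, fun k hk => List.getD_eq_default _ _ hk⟩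
  · ext s
    simp only [Set.mem_range, Set.mem_insert_iff]
    constructor
    · rintro ⟨k, rfl⟩
      by_cases hk : k < L.length
      · exact Or.inr ((hLmem _).1 (List.getD_eq_getElem _ _ hk ▸ List.getElem_mem hk))
      · exact Or.inl (List.getD_eq_default _ _ (not_lt.1 hk))
    · rintro (rfl | hs)
      · exact ⟨L.length, List.getD_eq_default _ _ le_rfl⟩
      · obtain ⟨i, hi, hieq⟩ := List.mem_iff_getElem.1 ((hLmem _).2 hs)
        exact ⟨i, by rw [List.getD_eq_getElem _ _ hi, hieq]⟩
  · intro i j hij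
    by_cases hi : i < L.length
    · by_cases hj : j < L.length
      · have hne : L[i] ≠ L[j] := fun h => hij ((hLnd.getElem_inj_iff).1 h)
        have := hPd _ ((hLmem _).1 (List.getElem_mem hi)) _ ((hLmem _).1 (List.getElem_mem hj)) hne
        show Disjoint (L.getD i ∅) (L.getD j ∅)
        rwa [List.getD_eq_getElem _ _ hi, List.getD_eq_getElem _ _ hj]
      · show Disjoint (L.getD i ∅) (L.getD j ∅)
        rw [List.getD_eq_default _ _ (not_lt.1 hj)]
        exact Set.disjoint_empty _
    · show Disjoint (L.getD i ∅) (L.getD j ∅)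
      rw [List.getD_eq_default _ _ (not_lt.1 hi)]
      exact Set.empty_disjoint _
  · ext x
    simp only [Set.mem_iUnion, Set.mem_sUnion]
    constructor
    · rintro ⟨k, hkx⟩
      by_cases hk : k < L.length
      · exact ⟨L.getD k ∅, (hLmem _).1 (List.getD_eq_getElem _ _ hk ▸ List.getElem_mem hk), hkx⟩
      · rw [List.getD_eq_default _ _ (not_lt.1 hk)] at hkx
        exact absurd hkx (Set.notMem_empty x)
    · rintro ⟨s, hs, hxs⟩
      obtain ⟨i, hi, hieq⟩ := List.mem_iff_getElem.1 ((hLmem _).2 hs)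
      exact ⟨i, by rw [List.getD_eq_getElem _ _ hi, hieq]; exact hxs⟩
include h𝒜 hα in
lemma entFun_bound : ∀ᵐ x ∂μ, ‖entFun 𝒜 μ α x‖ ≤ (n : ℝ) * Real.exp (-1) := by
  filter_upwards [ae_all_iff.2 (condFun_mem μ h𝒜 hα)] with x hx
  calc ‖entFun 𝒜 μ α x‖ ≤ ∑ i, ‖Real.negMulLog (condFun 𝒜 μ α i x)‖ := norm_sum_le _ _
    _ ≤ ∑ _i : Fin n, Real.exp (-1) := Finset.sum_le_sum fun i _ => by
        rw [Real.norm_eq_abs, abs_of_nonneg (Real.negMulLog_nonneg (hx i).1 (hx i).2)]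
        exact negMulLog_le_exp_neg_one (hx i).1
    _ = n * Real.exp (-1) := by
        rw [Finset.sum_const, Finset.card_univ, Fintype.card_fin, nsmul_eq_mul]

include h𝒜 hα in
lemma master [StandardBorelSpace X] [Nonempty X]
    (hcg : @MeasurableSpace.CountablyGenerated X 𝒜) :
    sInf {r : ℝ | ∃ β : ℕ → Set X, (∀ i, MeasurableSet[𝒜] (β i)) ∧
        Pairwise (Function.onFun Disjoint β) ∧ μ (⋃ i, β i)ᶜ = 0 ∧
        (Summable fun i => Real.negMulLog (μ (β i)).toReal) ∧
        r = condShannonEntropy μ α β}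
      = ∫ x, shannonEntropy (ProbabilityTheory.condExpKernel μ 𝒜 x) α ∂μ := by
  classical
  haveI : SigmaFinite (μ.trim h𝒜) := by infer_instance
  set S : Set ℝ := {r : ℝ | ∃ β : ℕ → Set X, (∀ i, MeasurableSet[𝒜] (β i)) ∧
      Pairwise (Function.onFun Disjoint β) ∧ μ (⋃ i, β i)ᶜ = 0 ∧
      (Summable fun i => Real.negMulLog (μ (β i)).toReal) ∧
      r = condShannonEntropy μ α β} with hS_def
  -- Rewrite the right-hand side using the conditional expectation.
  have hRHS : ∫ x, shannonEntropy (ProbabilityTheory.condExpKernel μ 𝒜 x) α ∂μ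
      = ∫ x, entFun 𝒜 μ α x ∂μ := by
    refine integral_congr_ae ?_
    have hker : ∀ i : Fin n, (fun x => ((ProbabilityTheory.condExpKernel μ 𝒜 x) (α i)).toReal)
        =ᵐ[μ] condFun 𝒜 μ α i :=
      fun i => ProbabilityTheory.condExpKernel_ae_eq_condExp h𝒜 (hα.1 i)
    filter_upwards [ae_all_iff.2 hker] with x hx
    calc shannonEntropy (ProbabilityTheory.condExpKernel μ 𝒜 x) α
        = ∑ i, Real.negMulLog ((ProbabilityTheory.condExpKernel μ 𝒜 x) (α i)).toReal :=
          tsum_fintype _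
      _ = entFun 𝒜 μ α x := Finset.sum_congr rfl fun i _ => by rw [hx i]
  -- Lower bound for every competitor.
  have hLB : ∀ r ∈ S, ∫ x, entFun 𝒜 μ α x ∂μ ≤ r := by
    rintro r ⟨β, hβmeas, hβd, hβc, hβfin, rfl⟩
    exact integral_entFun_le μ h𝒜 hα hβmeas hβd hβc hβfin
  -- The generating sequence and its dyadic partitions.
  set t : ℕ → Set X := @MeasurableSpace.natGeneratingSequence X 𝒜 hcg with ht_def
  have ht𝒜 : ∀ j, MeasurableSet[𝒜] (t j) :=
    fun j => @MeasurableSpace.measurableSet_natGeneratingSequence X 𝒜 hcg j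
  have htm : ∀ j, MeasurableSet (t j) := fun j => h𝒜 _ (ht𝒜 j)
  have hgen : MeasurableSpace.generateFrom (Set.range t) = 𝒜 :=
    @MeasurableSpace.generateFrom_natGeneratingSequence X 𝒜 hcg
  have hPmeas𝒜 : ∀ N, ∀ u ∈ memPartition t N, MeasurableSet[𝒜] u :=
    fun N u hu => @MeasurableSpace.measurableSet_memPartition X 𝒜 t ht𝒜 N u hu
  -- For each level `N`, the atoms give an element of `S` computing `∫ entFun (ℱ N)`.
  have key : ∀ N : ℕ, ∃ r ∈ S,
      r = ∫ x, entFun (MeasurableSpace.generateFrom (memPartition t N)) μ α x ∂μ := by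
    intro N
    obtain ⟨β, hrange, hβd, hβcov, N₀, hN₀⟩ := exists_enum (finite_memPartition t N)
      (fun u hu v hv huv => disjoint_memPartition t N hu hv huv)
    have hβmem : ∀ k, β k = ∅ ∨ β k ∈ memPartition t N := by
      intro k
      have : β k ∈ insert ∅ (memPartition t N) := hrange ▸ Set.mem_range_self k
      simpa using this
    have hβmeas𝒜 : ∀ k, MeasurableSet[𝒜] (β k) := fun k => by
      rcases hβmem k with h | h
      · rw [h]; exact @MeasurableSet.empty X 𝒜
      · exact hPmeas𝒜 N _ h
    have hβm : ∀ k, MeasurableSet (β k) := fun k => h𝒜 _ (hβmeas𝒜 k)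
    have hβc : μ (⋃ k, β k)ᶜ = 0 := by
      rw [hβcov, sUnion_memPartition, Set.compl_univ, measure_empty]
    have hβfin : Summable fun k => Real.negMulLog (μ (β k)).toReal := by
      refine summable_of_ne_finset_zero (s := Finset.range N₀) fun k hk => ?_
      rw [hN₀ k (by simpa using hk)]
      simp
    refine ⟨condShannonEntropy μ α β, ⟨β, hβmeas𝒜, hβd, hβc, hβfin, rfl⟩, ?_⟩
    rw [condShannonEntropy_eq_integral_entFun μ hα hβm hβd hβc hβfin, hrange,
      MeasurableSpace.generateFrom_insert_empty]
  -- The partition filtration and martingale convergence.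
  have hℱ𝒜 : ∀ N, ProbabilityTheory.partitionFiltration htm N ≤ 𝒜 := fun N =>
    MeasurableSpace.generateFrom_le (fun u hu => hPmeas𝒜 N u hu)
  have hsup : (⨆ N, ProbabilityTheory.partitionFiltration htm N) = 𝒜 := by
    rw [ProbabilityTheory.iSup_partitionFiltration_eq_generateFrom_range htm, hgen]
  have hmart : ∀ᵐ x ∂μ, ∀ i : Fin n, Tendsto
      (fun N => condFun (MeasurableSpace.generateFrom (memPartition t N)) μ α i x) atTop
      (𝓝 (condFun 𝒜 μ α i x)) := by
    rw [ae_all_iff]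
    intro i
    have hgmeas : StronglyMeasurable[⨆ N, ProbabilityTheory.partitionFiltration htm N]
        (condFun 𝒜 μ α i) := by
      rw [hsup]; exact stronglyMeasurable_condExp
    have h1 := Integrable.tendsto_ae_condExp (μ := μ)
      (ℱ := ProbabilityTheory.partitionFiltration htm) integrable_condExp hgmeas
    have h2 : ∀ N, μ[condFun 𝒜 μ α i | ProbabilityTheory.partitionFiltration htm N]
        =ᵐ[μ] condFun (MeasurableSpace.generateFrom (memPartition t N)) μ α i :=
      fun N => condExp_condExp_of_le (hℱ𝒜 N) h𝒜
    filter_upwards [h1, ae_all_iff.2 h2] with x hx1 hx2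
    exact hx1.congr fun N => hx2 N
  -- Dominated convergence.
  have hDCT : Tendsto
      (fun N => ∫ x, entFun (MeasurableSpace.generateFrom (memPartition t N)) μ α x ∂μ) atTop
      (𝓝 (∫ x, entFun 𝒜 μ α x ∂μ)) := by
    refine tendsto_integral_of_dominated_convergence (fun _ => (n : ℝ) * Real.exp (-1))
      ?_ (integrable_const _) ?_ ?_
    · intro N
      exact (entFun_integrable μ ((hℱ𝒜 N).trans h𝒜) hα).aestronglyMeasurable
    · intro N
      exact entFun_bound μ ((hℱ𝒜 N).trans h𝒜) hα
    · filter_upwards [hmart] with x hx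
      exact tendsto_finset_sum _ fun i _ => (Real.continuous_negMulLog.tendsto _).comp (hx i)
  -- Assembly.
  obtain ⟨r0, hr0S, _⟩ := key 0
  have hne : S.Nonempty := ⟨r0, hr0S⟩
  have hbdd : BddBelow S := ⟨_, hLB⟩
  rw [hRHS]
  refine le_antisymm ?_ (le_csInf hne hLB)
  refine ge_of_tendsto' hDCT fun N => ?_
  obtain ⟨r, hrS, hreq⟩ := key N
  exact hreq ▸ csInf_le hbdd hrS
end Main


/-- For a finite partition `α` of finite entropy and a countably-generated σ-subalgebra `𝒜`,
`H(α | 𝒜) = ∫_X H_{μ|_x^𝒜}(α) dμ(x)`. -/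
theorem stmt3 {X : Type*} [m : MeasurableSpace X] [StandardBorelSpace X] [Nonempty X]
    (μ : Measure X) [IsProbabilityMeasure μ]
    (𝒜 : MeasurableSpace X) (h𝒜 : 𝒜 ≤ m) (hcg : @MeasurableSpace.CountablyGenerated X 𝒜)
    {n : ℕ} (α : Fin n → Set X) (hα : @IsPartition X (Fin n) m μ α)
    (hαfin : Summable fun i => Real.negMulLog (μ (α i)).toReal) :
    @condEntropyAlg X (Fin n) m μ α 𝒜 =
      ∫ x, @shannonEntropy X (Fin n) m (ProbabilityTheory.condExpKernel (mΩ := m) μ 𝒜 x) α ∂μ := by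
  exact @master X 𝒜 m μ _ h𝒜 n α hα _ _ hcg
end

section
/- Let P: 𝒫(X × Y) → 𝒫(X × Y) be a probability kernel such that for every (x,y), the X-marginal of P(δ_{(x,y)}) is δ_x, and P(δ_{(x,y₁)}) = P(δ_{(x,y₂)}) for all x, y₁, y₂. Then for a probability measure μ on X × Y, P(μ) = μ if and only if the conditional measures of μ over the σ-algebra of the X-coordinate satisfy μ|_{(x,y)}^𝒜 = P(δ_{(x,y)}) for μ-a.e. (x,y). -/
open MeasureTheory ProbabilityTheory
open scoped ENNReal

/-- The σ-algebra of the first coordinate (not registered as an instance). -/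
def mA (X Y : Type*) [MeasurableSpace X] : MeasurableSpace (X × Y) :=
  MeasurableSpace.comap Prod.fst inferInstance

/-- Any countably generated measurable space admits a countable generating π-system. -/
lemma exists_countable_pisys (α : Type*) [m : MeasurableSpace α]
    [MeasurableSpace.CountablyGenerated α] :
    ∃ S : Set (Set α), S.Countable ∧ IsPiSystem S ∧ m = MeasurableSpace.generateFrom S := by
  obtain ⟨f, hf⟩ := Set.Countable.exists_eq_range
    (MeasurableSpace.countable_countableGeneratingSet (α := α))
    ⟨∅, MeasurableSpace.empty_mem_countableGeneratingSet⟩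
  refine ⟨Set.range (fun F : Finset ℕ => ⋂ i ∈ F, f i), Set.countable_range _, ?_, ?_⟩
  · rintro _ ⟨F₁, rfl⟩ _ ⟨F₂, rfl⟩ -
    refine ⟨F₁ ∪ F₂, ?_⟩
    ext x
    simp [Finset.mem_union, or_imp, forall_and]
  · have h1 : m = MeasurableSpace.generateFrom (Set.range f) := by
      rw [← hf]; exact MeasurableSpace.generateFrom_countableGeneratingSet.symm
    rw [h1]
    refine le_antisymm ?_ ?_
    · refine MeasurableSpace.generateFrom_le ?_
      rintro _ ⟨i, rfl⟩
      exact MeasurableSpace.measurableSet_generateFrom ⟨{i}, by simp⟩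
    · refine MeasurableSpace.generateFrom_le ?_
      rintro _ ⟨F, rfl⟩
      exact Finset.measurableSet_biInter F fun i _ =>
        MeasurableSpace.measurableSet_generateFrom ⟨i, rfl⟩

/-- Let `κ` be a probability kernel on `X × Y` such that the `X`-marginal of `κ (x, y)` is
`δ_x` and `κ (x, y)` does not depend on `y`. Then a probability measure `μ` on `X × Y`
satisfies `κ(μ) = μ` iff the conditional measures of `μ` along the σ-algebra `𝒜` of the
first coordinate satisfy `μ|_{(x,y)}^𝒜 = κ (x, y)` for `μ`-a.e. `(x, y)`. -/
theorem stmt6 {X Y : Type*} [MeasurableSpace X] [MeasurableSpace Y]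
    [StandardBorelSpace X] [StandardBorelSpace Y] [Nonempty X] [Nonempty Y]
    (κ : Kernel (X × Y) (X × Y)) [IsMarkovKernel κ]
    (hfst : ∀ x : X, ∀ y : Y, (κ (x, y)).map Prod.fst = Measure.dirac x)
    (hconst : ∀ x : X, ∀ y₁ y₂ : Y, κ (x, y₁) = κ (x, y₂))
    (μ : Measure (X × Y)) [IsProbabilityMeasure μ] :
    μ.bind (fun p => κ p) = μ ↔
      ∀ᵐ p ∂μ,
        (condExpKernel μ (MeasurableSpace.comap Prod.fst inferInstance) p : Measure (X × Y))
          = κ p := by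
  classical
  obtain ⟨y₀⟩ := ‹Nonempty Y›
  show μ.bind (fun p => κ p) = μ ↔
      ∀ᵐ p ∂μ, (condExpKernel μ (mA X Y) p : Measure (X × Y)) = κ p
  have hm : mA X Y ≤ (inferInstance : MeasurableSpace (X × Y)) :=
    (measurable_fst (α := X) (β := Y)).comap_le
  have hκconst : ∀ p : X × Y, κ p = κ (p.1, y₀) := fun p => hconst p.1 p.2 y₀
  have hdirac : ∀ (p : X × Y) (B : Set X), MeasurableSet B →
      κ p (Prod.fst ⁻¹' B) = Measure.dirac p.1 B := by
    intro p B hB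
    rw [← Measure.map_apply measurable_fst hB, hfst p.1 p.2]
  have hfull : ∀ (p : X × Y) (s : Set (X × Y)) (B : Set X), MeasurableSet s → MeasurableSet B →
      p.1 ∈ B → κ p (s ∩ Prod.fst ⁻¹' B) = κ p s := by
    intro p s B hs hB hpB
    have h0 : κ p (s \ Prod.fst ⁻¹' B) = 0 := by
      refine measure_mono_null (Set.diff_subset_compl _ _) ?_
      have hc : (Prod.fst ⁻¹' B)ᶜ = (Prod.fst ⁻¹' Bᶜ : Set (X × Y)) := rfl
      rw [hc, hdirac p Bᶜ hB.compl, Measure.dirac_apply' _ hB.compl,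
        Set.indicator_of_notMem (by simpa using hpB)]
    have h1 := measure_inter_add_diff (μ := κ p) s (measurable_fst hB)
    rw [h0, add_zero] at h1
    exact h1
  have hzero : ∀ (p : X × Y) (s : Set (X × Y)) (B : Set X), MeasurableSet B → p.1 ∉ B →
      κ p (s ∩ Prod.fst ⁻¹' B) = 0 := by
    intro p s B hB hpB
    refine measure_mono_null Set.inter_subset_right ?_
    rw [hdirac p B hB, Measure.dirac_apply' _ hB, Set.indicator_of_notMem hpB]
  -- the key set-lintegral identity, assuming invariance
  have hsetl : μ.bind (fun p => κ p) = μ → ∀ s : Set (X × Y), MeasurableSet s →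
      ∀ B : Set X, MeasurableSet B →
      ∫⁻ p in Prod.fst ⁻¹' B, κ p s ∂μ = μ (s ∩ Prod.fst ⁻¹' B) := by
    intro hbind s hs B hB
    have hA : MeasurableSet (Prod.fst ⁻¹' B : Set (X × Y)) := measurable_fst hB
    have h1 : μ (s ∩ Prod.fst ⁻¹' B) = ∫⁻ p, κ p (s ∩ Prod.fst ⁻¹' B) ∂μ := by
      conv_lhs => rw [← hbind]
      exact Measure.bind_apply (hs.inter hA) (Kernel.measurable κ).aemeasurable
    have h2 : ∫⁻ p in (Prod.fst ⁻¹' B)ᶜ, κ p (s ∩ Prod.fst ⁻¹' B) ∂μ = 0 := by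
      rw [setLIntegral_congr_fun hA.compl
        (fun p (hp : p ∈ (Prod.fst ⁻¹' B)ᶜ) => hzero p s B hB hp)]
      simp
    rw [h1, ← lintegral_add_compl (fun p => κ p (s ∩ Prod.fst ⁻¹' B)) hA, h2, add_zero]
    exact setLIntegral_congr_fun hA
      (fun p (hp : p ∈ Prod.fst ⁻¹' B) => (hfull p s B hs hB hp).symm)
  -- the per-set identification of the conditional kernel with κ, assuming invariance
  have key : μ.bind (fun p => κ p) = μ → ∀ s : Set (X × Y), MeasurableSet s →
      ∀ᵐ p ∂μ, condExpKernel μ (mA X Y) p s = κ p s := by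
    intro hbind s hs
    have hg_meas : Measurable[mA X Y] fun p : X × Y => (κ p s).toReal := by
      have h1 : Measurable fun x : X => (κ (x, y₀) s).toReal :=
        ((Kernel.measurable_coe κ hs).comp (measurable_id.prodMk measurable_const)).ennreal_toReal
      have h2 : Measurable[mA X Y] (Prod.fst : X × Y → X) := Measurable.of_comap_le le_rfl
      have h3 : (fun p : X × Y => (κ p s).toReal)
          = fun p : X × Y => (κ (p.1, y₀) s).toReal := by
        funext p; rw [hκconst p]
      rw [h3]
      exact h1.comp h2
    have hbound : ∀ p : X × Y, ‖(κ p s).toReal‖ ≤ 1 := by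
      intro p
      rw [Real.norm_eq_abs, abs_of_nonneg ENNReal.toReal_nonneg]
      calc (κ p s).toReal ≤ (1 : ℝ≥0∞).toReal :=
            ENNReal.toReal_mono ENNReal.one_ne_top prob_le_one
        _ = 1 := by simp
    have hg_int : Integrable (fun p : X × Y => (κ p s).toReal) μ :=
      (integrable_const (1 : ℝ)).mono'
        ((hg_meas.mono hm le_rfl).stronglyMeasurable.aestronglyMeasurable)
        (Filter.Eventually.of_forall hbound)
    have hf_int : Integrable (s.indicator fun _ => (1 : ℝ)) μ := (integrable_const 1).indicator hs
    have heq : ∀ A : Set (X × Y), MeasurableSet[mA X Y] A → μ A < ∞ →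
        ∫ p in A, (κ p s).toReal ∂μ = ∫ p in A, s.indicator (fun _ => (1 : ℝ)) p ∂μ := by
      rintro A ⟨B, hB, rfl⟩ -
      have hA : MeasurableSet (Prod.fst ⁻¹' B : Set (X × Y)) := measurable_fst hB
      have hL : ∫ p in Prod.fst ⁻¹' B, (κ p s).toReal ∂μ
          = (μ (s ∩ Prod.fst ⁻¹' B)).toReal := by
        rw [integral_toReal ((Kernel.measurable_coe κ hs).aemeasurable)
          (Filter.Eventually.of_forall fun p => measure_lt_top _ _),
          hsetl hbind s hs B hB]
      have hR : ∫ p in Prod.fst ⁻¹' B, s.indicator (fun _ => (1 : ℝ)) p ∂μ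
          = (μ (s ∩ Prod.fst ⁻¹' B)).toReal := by
        rw [integral_indicator hs, setIntegral_const, measureReal_def, Measure.restrict_apply hs]
        simp
      rw [hL, hR]
    have hcond := ae_eq_condExp_of_forall_setIntegral_eq hm hf_int
      (fun A _ _ => hg_int.integrableOn) heq
      ⟨_, hg_meas.stronglyMeasurable, Filter.EventuallyEq.rfl⟩
    have hck := condExpKernel_ae_eq_condExp (μ := μ) hm hs
    filter_upwards [hcond, hck] with p h1 h2
    exact ((ENNReal.toReal_eq_toReal_iff' (measure_ne_top _ _) (measure_ne_top _ _)).mp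
      (h2.trans h1.symm))
  constructor
  · intro hbind
    obtain ⟨S, hSc, hSpi, hSgen⟩ := exists_countable_pisys (X × Y)
    have hSmeas : ∀ t ∈ S, MeasurableSet t := by
      intro t ht
      have h : MeasurableSet[MeasurableSpace.generateFrom S] t :=
        MeasurableSpace.measurableSet_generateFrom ht
      rwa [← hSgen] at h
    have h_basic : ∀ᵐ p ∂μ, ∀ t ∈ S, condExpKernel μ (mA X Y) p t = κ p t :=
      (ae_ball_iff hSc).2 fun t ht => key hbind t (hSmeas t ht)
    have h_all : ∀ᵐ p ∂μ, ∀ ⦃t : Set (X × Y)⦄, MeasurableSet t →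
        condExpKernel μ (mA X Y) p t = κ p t := by
      refine MeasurableSpace.ae_induction_on_inter hSgen hSpi ?_ h_basic ?_ ?_
      · exact ae_of_all _ fun p => by simp
      · refine ae_of_all _ fun p t ht h => ?_
        rw [measure_compl ht (measure_ne_top _ _), measure_compl ht (measure_ne_top _ _), h,
          measure_univ, measure_univ]
      · exact ae_of_all _ fun p f hd hf h => by
          rw [measure_iUnion hd hf, measure_iUnion hd hf]; exact tsum_congr h
    filter_upwards [h_all] with p hp
    ext t ht
    exact hp ht
  · intro hae
    ext t ht
    rw [Measure.bind_apply ht (Kernel.measurable κ).aemeasurable]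
    have h1 : ∫⁻ p, κ p t ∂μ = ∫⁻ p, condExpKernel μ (mA X Y) p t ∂μ :=
      lintegral_congr_ae (hae.mono fun p hp => by simp [hp])
    rw [h1]
    have hmeas : Measurable fun p => condExpKernel μ (mA X Y) p t :=
      (measurable_condExpKernel ht).mono hm le_rfl
    have hfin : ∫⁻ p, condExpKernel μ (mA X Y) p t ∂μ ≠ ∞ := by
      refine ne_of_lt (lt_of_le_of_lt (lintegral_mono fun p => prob_le_one) ?_)
      simp
    have h2 : (∫⁻ p, condExpKernel μ (mA X Y) p t ∂μ).toReal = (μ t).toReal := by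
      rw [← integral_toReal hmeas.aemeasurable
        (Filter.Eventually.of_forall fun p => measure_lt_top _ _),
        (integral_congr_ae (condExpKernel_ae_eq_condExp (μ := μ) hm ht) :
          ∫ a, (condExpKernel μ (mA X Y) a t).toReal ∂μ = _),
        integral_condExp hm, integral_indicator ht, setIntegral_const]
      simp [measureReal_def]
    exact (ENNReal.toReal_eq_toReal_iff' hfin (measure_ne_top μ t)).mp h2
end

section
/- If ν is a Gibbs measure for a Gibbs structure 𝒢 and F ⊆ V, then for ν-almost every ω, the conditional measure ν|_ω^{ℬ(F)} is a Gibbs measure for the pinned structure 𝒢_{F,ω} (obtained by fixing the coordinates in F to agree with ω). -/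
open MeasureTheory Real Filter Topology
open scoped ENNReal

noncomputable section
open scoped Classical

/-- A Gibbs structure: a vertex set `V`, alphabets `A v`, and a potential `Φ` assigning to
each finite `T ⊆ V` a function of configurations, such that each vertex lies in only
finitely many `T` with `Φ T ≢ 0`. -/
structure GibbsStructure (V : Type*) (A : V → Type*) where
  Φ : Finset V → ((∀ v, A v) → ℝ)
  locFin : ∀ v : V, {T : Finset V | v ∈ T ∧ Φ T ≠ 0}.Finite

namespace GibbsStructure

variable {V : Type*} {A : V → Type*} [∀ v, Fintype (A v)] [∀ v, Nonempty (A v)]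
  [∀ v, MeasurableSpace (A v)] [∀ v, MeasurableSingletonClass (A v)]

/-- The energy of the configuration `x` contributed by all terms of the potential that
meet the finite window `Λ`: `∑_{T ∩ Λ ≠ ∅} Φ_T(x)`. -/
def energy (𝒢 : GibbsStructure V A) (Λ : Finset V) (x : ∀ v, A v) : ℝ :=
  ∑ᶠ T ∈ {T : Finset V | ((T : Set V) ∩ (Λ : Set V)).Nonempty}, 𝒢.Φ T x

/-- Replace the coordinates of `η` inside `Λ` by `τ`. -/
def paste (Λ : Finset V) (η : ∀ v, A v) (τ : ∀ v : Λ, A v) : ∀ v, A v :=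
  fun v => if h : v ∈ Λ then τ ⟨v, h⟩ else η v

/-- The Gibbs weight of the local configuration `τ` in the window `Λ` around `η`, where in
addition the coordinates in `F` are pinned to the configuration `pin` (take `F = ∅` for the
unpinned kernel). -/
def pinWeight (𝒢 : GibbsStructure V A) (F : Set V) (pin : ∀ v, A v) (Λ : Finset V)
    (η : ∀ v, A v) (τ : ∀ v : Λ, A v) : ℝ :=
  if ∀ v ∈ F, paste Λ η τ v = pin v then Real.exp (-(energy 𝒢 Λ (paste Λ η τ))) else 0

/-- The Gibbs resampling measure `π_{𝒢,Λ}(η)` (with pinning `(F, pin)`): resample the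
coordinates in `Λ` with probabilities proportional to `exp(-∑_{T ∩ Λ ≠ ∅} Φ_T)`, keeping the
other coordinates of `η` fixed. -/
def kernelMeasure (𝒢 : GibbsStructure V A) (F : Set V) (pin : ∀ v, A v) (Λ : Finset V)
    (η : ∀ v, A v) : Measure (∀ v, A v) :=
  ∑ τ : ∀ v : Λ, A v,
    (ENNReal.ofReal (pinWeight 𝒢 F pin Λ η τ / ∑ τ' : ∀ v : Λ, A v, pinWeight 𝒢 F pin Λ η τ'))
      • Measure.dirac (paste Λ η τ)

/-- The Gibbs probability kernel `P_{𝒢,Λ} : 𝒫(Ω) → 𝒫(Ω)` (no pinning). -/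
def gibbsUpdate (𝒢 : GibbsStructure V A) (Λ : Finset V) (μ : Measure (∀ v, A v)) :
    Measure (∀ v, A v) :=
  μ.bind fun η => kernelMeasure 𝒢 ∅ η Λ η

/-- `ν` is a Gibbs measure for `𝒢`: it is fixed by every kernel `P_{𝒢,Λ}`, `Λ ⋐ V`. -/
def IsGibbs (𝒢 : GibbsStructure V A) (ν : Measure (∀ v, A v)) : Prop :=
  ∀ Λ : Finset V, gibbsUpdate 𝒢 Λ ν = ν

/-- `ν` is a Gibbs measure for the pinned structure `𝒢_{S,ω}`: it is supported on
configurations agreeing with `ω` on `S` and fixed by `P_{𝒢,Λ}` for all finite `Λ ⊆ V ∖ S`. -/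
def IsGibbsPinned (𝒢 : GibbsStructure V A) (S : Set V) (ω : ∀ v, A v)
    (ν : Measure (∀ v, A v)) : Prop :=
  (∀ᵐ t ∂ν, ∀ v ∈ S, t v = ω v) ∧
    ∀ Λ : Finset V, (Λ : Set V) ⊆ Sᶜ → gibbsUpdate 𝒢 Λ ν = ν

/-- The boundary `∂Λ = ∪ {T ∖ Λ : T ∩ Λ ≠ ∅, Φ_T ≢ 0}`. -/
def boundary (𝒢 : GibbsStructure V A) (Λ : Finset V) : Set V :=
  ⋃ T ∈ {T : Finset V | ((T : Set V) ∩ (Λ : Set V)).Nonempty ∧ 𝒢.Φ T ≠ 0},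
    ((T : Set V) \ (Λ : Set V))

/-- Extend a configuration on `W` to a full configuration (arbitrarily off `W`). -/
def extendFull (W : Finset V) (x : ∀ v : W, A v) : ∀ v, A v :=
  fun v => if h : v ∈ W then x ⟨v, h⟩ else Classical.arbitrary (A v)

/-- Restrict a full configuration to `W`. -/
def restr (W : Finset V) (x : ∀ v, A v) : ∀ v : W, A v := fun v => x v

/-- Replace the coordinates of a `W`-configuration `η` inside `Λ` by `τ`. -/
def pasteW (W Λ : Finset V) (η : ∀ v : W, A v) (τ : ∀ v : Λ, A v) : ∀ v : W, A v :=
  fun v => if h : (v : V) ∈ Λ then τ ⟨v, h⟩ else η v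

/-- The Gibbs resampling measure `π_{𝒢,Λ}` acting on configurations on the finite window
`W`; by the Markov property this is the correct local kernel when `Λ ∪ ∂Λ ⊆ W`. -/
def kernelMeasureW (𝒢 : GibbsStructure V A) (W Λ : Finset V) (η : ∀ v : W, A v) :
    Measure (∀ v : W, A v) :=
  ∑ τ : ∀ v : Λ, A v,
    (ENNReal.ofReal (Real.exp (-(energy 𝒢 Λ (extendFull W (pasteW W Λ η τ)))) /
        ∑ τ' : ∀ v : Λ, A v, Real.exp (-(energy 𝒢 Λ (extendFull W (pasteW W Λ η τ'))))))
      • Measure.dirac (pasteW W Λ η τ)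

/-- The σ-algebra `ℬ(F)` generated by the coordinates in `F ⊆ V`. -/
def coordSigma (F : Set V) : MeasurableSpace (∀ v, A v) :=
  ⨆ v ∈ F, MeasurableSpace.comap (fun x => x v) inferInstance

end GibbsStructure

open GibbsStructure ProbabilityTheory

section Aux

open GibbsStructure ProbabilityTheory

variable {V : Type*} {A : V → Type*} [∀ v, Fintype (A v)] [∀ v, Nonempty (A v)]
  [∀ v, MeasurableSpace (A v)] [∀ v, MeasurableSingletonClass (A v)]

lemma coordSigma_le (F : Set V) : coordSigma (A := A) F ≤ MeasurableSpace.pi :=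
  iSup₂_le fun v _ => (measurable_pi_apply v).comap_le

lemma measurableSet_eval {F : Set V} {v : V} (hv : v ∈ F) (a : A v) :
    MeasurableSet[coordSigma (A := A) F] {t : ∀ w, A w | t v = a} := by
  have hle : MeasurableSpace.comap (fun x : ∀ w, A w => x v) inferInstance
      ≤ coordSigma (A := A) F :=
    le_iSup₂ (f := fun (v : V) (_ : v ∈ F) =>
      MeasurableSpace.comap (fun x : ∀ w, A w => x v) inferInstance) v hv
  exact hle _ ⟨{a}, measurableSet_singleton a, rfl⟩

lemma mem_iff_of_agree {F : Set V} {B : Set (∀ v, A v)}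
    (hB : MeasurableSet[coordSigma (A := A) F] B) {x y : ∀ v, A v}
    (hxy : ∀ v ∈ F, x v = y v) : x ∈ B ↔ y ∈ B := by
  have hle : coordSigma (A := A) F ≤
      MeasurableSpace.comap (fun (z : ∀ v, A v) (v : F) => z v) ⊤ := by
    refine iSup₂_le fun v hv => ?_
    have h1 : (fun z : ∀ w, A w => z v)
        = (fun y : ∀ w : F, A w => y ⟨v, hv⟩) ∘ (fun z (w : F) => z w) := rfl
    rw [h1, ← MeasurableSpace.comap_comp]
    exact MeasurableSpace.comap_mono le_top
  obtain ⟨S, -, rfl⟩ := MeasurableSpace.measurableSet_comap.mp (hle B hB)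
  have h2 : (fun v : F => x v) = fun v : F => y v := funext fun v => hxy v v.2
  simp only [Set.mem_preimage]
  rw [h2]

lemma pinWeight_empty (𝒢 : GibbsStructure V A) (pin : ∀ v, A v) (Λ : Finset V)
    (η : ∀ v, A v) (τ : ∀ v : Λ, A v) :
    pinWeight 𝒢 ∅ pin Λ η τ = Real.exp (-(energy 𝒢 Λ (paste Λ η τ))) := by
  simp [pinWeight]

lemma pinWeight_sum_pos (𝒢 : GibbsStructure V A) (pin : ∀ v, A v) (Λ : Finset V)
    (η : ∀ v, A v) :
    0 < ∑ τ' : ∀ v : Λ, A v, pinWeight 𝒢 ∅ pin Λ η τ' :=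
  Finset.sum_pos (fun τ _ => by rw [pinWeight_empty]; exact Real.exp_pos _)
    Finset.univ_nonempty

lemma kernelMeasure_empty_apply (𝒢 : GibbsStructure V A) (pin : ∀ v, A v) (Λ : Finset V)
    (η : ∀ v, A v) {s : Set (∀ v, A v)} (hs : MeasurableSet s) :
    kernelMeasure 𝒢 ∅ pin Λ η s
      = ∑ τ : ∀ v : Λ, A v,
          ENNReal.ofReal (pinWeight 𝒢 ∅ pin Λ η τ /
              ∑ τ' : ∀ v : Λ, A v, pinWeight 𝒢 ∅ pin Λ η τ') *
            s.indicator (1 : (∀ v, A v) → ℝ≥0∞) (paste Λ η τ) := by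
  rw [kernelMeasure, Measure.finset_sum_apply]
  exact Finset.sum_congr rfl fun τ _ => by
    rw [Measure.smul_apply, Measure.dirac_apply' _ hs, smul_eq_mul]

lemma kernelMeasure_empty_univ (𝒢 : GibbsStructure V A) (pin : ∀ v, A v) (Λ : Finset V)
    (η : ∀ v, A v) :
    kernelMeasure 𝒢 ∅ pin Λ η Set.univ = 1 := by
  rw [kernelMeasure_empty_apply 𝒢 pin Λ η MeasurableSet.univ]
  simp only [Set.indicator_univ, Pi.one_apply, mul_one]
  rw [← ENNReal.ofReal_sum_of_nonneg (fun τ _ => div_nonneg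
      (by rw [pinWeight_empty]; positivity) (pinWeight_sum_pos 𝒢 pin Λ η).le),
    ← Finset.sum_div, div_self (pinWeight_sum_pos 𝒢 pin Λ η).ne', ENNReal.ofReal_one]

lemma kernelMeasure_inter (𝒢 : GibbsStructure V A) {F : Set V} {Λ : Finset V}
    (hΛ : (Λ : Set V) ⊆ Fᶜ) (η : ∀ v, A v) {B s : Set (∀ v, A v)}
    (hB : MeasurableSet[coordSigma (A := A) F] B) (hs : MeasurableSet s) :
    kernelMeasure 𝒢 ∅ η Λ η (B ∩ s)
      = B.indicator (1 : (∀ v, A v) → ℝ≥0∞) η * kernelMeasure 𝒢 ∅ η Λ η s := by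
  have hBm : MeasurableSet B := coordSigma_le (A := A) F B hB
  rw [kernelMeasure_empty_apply 𝒢 η Λ η (hBm.inter hs),
    kernelMeasure_empty_apply 𝒢 η Λ η hs, Finset.mul_sum]
  refine Finset.sum_congr rfl fun τ _ => ?_
  have hmem : paste Λ η τ ∈ B ↔ η ∈ B := by
    refine mem_iff_of_agree hB fun v hv => ?_
    have hvΛ : v ∉ Λ := fun h => hΛ h hv
    simp [paste, hvΛ]
  by_cases hη : η ∈ B <;> by_cases hp : paste Λ η τ ∈ s <;>
    simp [Set.indicator_apply, hη, hp, hmem, Set.mem_inter_iff, mul_comm, mul_left_comm]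

variable [Countable V] [StandardBorelSpace (∀ v, A v)]

lemma key_cyl (𝒢 : GibbsStructure V A) (ν : Measure (∀ v, A v)) [IsProbabilityMeasure ν]
    (hν : IsGibbs 𝒢 ν) (F : Set V) {Λ : Finset V} (hΛ : (Λ : Set V) ⊆ Fᶜ)
    {s : Set (∀ v, A v)} (hs : MeasurableSet s) :
    ∀ᵐ ω ∂ν, gibbsUpdate 𝒢 Λ (condExpKernel ν (coordSigma (A := A) F) ω) s
      = condExpKernel ν (coordSigma (A := A) F) ω s := by
  have hm : coordSigma (A := A) F ≤ MeasurableSpace.pi := coordSigma_le (A := A) F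
  haveI : IsFiniteMeasure (ν.trim hm) :=
    ⟨by rw [trim_measurableSet_eq hm MeasurableSet.univ]; exact measure_lt_top ν _⟩
  set f : (∀ v, A v) → Measure (∀ v, A v) := fun η => kernelMeasure 𝒢 ∅ η Λ η with hf_def
  have hb : ν.bind f = ν := hν Λ
  have hfuniv : ∀ η, f η Set.univ = 1 := fun η => kernelMeasure_empty_univ 𝒢 η Λ η
  have hfle : ∀ η (t : Set (∀ v, A v)), f η t ≤ 1 := fun η t =>
    (measure_mono (Set.subset_univ t)).trans (hfuniv η).le
  have hfae : AEMeasurable f ν := by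
    by_contra h
    have h0 : ν.bind f = 0 := by
      show ((ν.map f).join) = 0
      rw [Measure.map_of_not_aemeasurable h, Measure.join_zero]
    have hν0 : ν = 0 := hb.symm.trans h0
    have h1 := measure_univ (μ := ν)
    rw [hν0] at h1
    simp at h1
  set g := hfae.mk f with hg_def
  have hgm : Measurable g := hfae.measurable_mk
  have hfg : f =ᵐ[ν] g := hfae.ae_eq_mk
  have hbg : ν.bind g = ν := by
    have hmap : ν.map f = ν.map g := Measure.map_congr hfg
    calc ν.bind g = (ν.map g).join := rfl
      _ = (ν.map f).join := by rw [hmap]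
      _ = ν.bind f := rfl
      _ = ν := hb
  set N := toMeasurable ν {η | f η ≠ g η} with hN_def
  have hNmeas : MeasurableSet N := measurableSet_toMeasurable ν _
  have hνN : ν N = 0 := by
    rw [hN_def, measure_toMeasurable]
    exact ae_iff.mp hfg
  set h : (∀ v, A v) → ℝ := fun η => (f η s).toReal with hh_def
  have hgsm : Measurable fun η => (g η s).toReal :=
    ((Measure.measurable_coe hs).comp hgm).ennreal_toReal
  have hh_eq : h =ᵐ[ν] fun η => (g η s).toReal := by
    filter_upwards [hfg] with η hη
    simp only [hh_def, hη]
  have hh_sm : AEStronglyMeasurable h ν := hgsm.aestronglyMeasurable.congr hh_eq.symm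
  have hh_bd : ∀ η, ‖h η‖ ≤ 1 := fun η => by
    rw [Real.norm_eq_abs, abs_of_nonneg ENNReal.toReal_nonneg]
    calc (f η s).toReal ≤ (1 : ℝ≥0∞).toReal :=
          ENNReal.toReal_mono (by simp) (hfle η s)
      _ = 1 := by simp
  have hh_int : Integrable h ν :=
    (integrable_const (1 : ℝ)).mono' hh_sm (ae_of_all _ hh_bd)
  have hset : ∀ B : Set (∀ v, A v), MeasurableSet[(coordSigma (A := A) F)] B →
      ∫ η in B, h η ∂ν = (ν (B ∩ s)).toReal := by
    intro B hB
    have hBm : MeasurableSet B := hm B hB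
    have key1 : ∀ η, B.indicator h η = (f η (B ∩ s)).toReal := by
      intro η
      have h2 := kernelMeasure_inter 𝒢 hΛ η hB hs
      by_cases hη : η ∈ B
      · rw [Set.indicator_of_mem hη]
        rw [show f η (B ∩ s) = kernelMeasure 𝒢 ∅ η Λ η (B ∩ s) from rfl, h2,
          Set.indicator_of_mem hη]
        simp [hh_def]
        rfl
      · rw [Set.indicator_of_notMem hη,
          show f η (B ∩ s) = kernelMeasure 𝒢 ∅ η Λ η (B ∩ s) from rfl, h2,
          Set.indicator_of_notMem hη]
        simp
    have haem : AEMeasurable (fun η => f η (B ∩ s)) ν := by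
      refine ⟨fun η => g η (B ∩ s), (Measure.measurable_coe (hBm.inter hs)).comp hgm, ?_⟩
      filter_upwards [hfg] with η hη
      rw [hη]
    rw [← integral_indicator hBm]
    calc ∫ η, B.indicator h η ∂ν = ∫ η, (f η (B ∩ s)).toReal ∂ν :=
          integral_congr_ae (ae_of_all _ key1)
      _ = (∫⁻ η, f η (B ∩ s) ∂ν).toReal := integral_toReal haem
          (ae_of_all _ fun η => lt_of_le_of_lt (hfle η _) ENNReal.one_lt_top)
      _ = (ν (B ∩ s)).toReal := by
          rw [lintegral_congr_ae (hfg.mono fun η hη => by rw [hη]),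
            ← Measure.bind_apply (hBm.inter hs) hgm.aemeasurable, hbg]
  have hcond : ν[s.indicator (fun _ => (1:ℝ)) | (coordSigma (A := A) F)] =ᵐ[ν] ν[h | (coordSigma (A := A) F)] := by
    refine ae_eq_condExp_of_forall_setIntegral_eq hm hh_int
      (fun B _ _ => integrable_condExp.integrableOn)
      (fun B hB _ => ?_)
      (StronglyMeasurable.aestronglyMeasurable stronglyMeasurable_condExp)
    rw [setIntegral_condExp hm ((integrable_const (1:ℝ)).indicator hs) hB, hset B hB]
    rw [integral_indicator_const (1:ℝ) hs, Measure.real, Measure.restrict_apply hs, Set.inter_comm,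
      smul_eq_mul, mul_one]
  have hI1 := condExp_ae_eq_integral_condExpKernel hm hh_int
  have hI2 := condExpKernel_ae_eq_condExp (μ := ν) hm hs
  have hκN : ∀ᵐ ω ∂ν, condExpKernel ν (coordSigma (A := A) F) ω N = 0 := by
    have h1 := condExpKernel_ae_eq_condExp (μ := ν) hm hNmeas
    have h2 : (ν[N.indicator (fun _ => (1:ℝ)) | (coordSigma (A := A) F)]) =ᵐ[ν] 0 := by
      have h3 : N.indicator (fun _ => (1:ℝ)) =ᵐ[ν] 0 := by
        filter_upwards [measure_eq_zero_iff_ae_notMem.mp hνN] with η hη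
        simp [Set.indicator_of_notMem hη]
      exact (condExp_congr_ae h3).trans (by rw [condExp_zero])
    filter_upwards [h1, h2] with ω hω1 hω2
    have h4 : (condExpKernel ν (coordSigma (A := A) F) ω N).toReal = 0 := by
      exact hω1.trans hω2
    rcases (ENNReal.toReal_eq_zero_iff _).mp h4 with h5 | h5
    · exact h5
    · exact absurd h5 (measure_ne_top _ _)
  filter_upwards [hI1, hI2, hcond, hκN] with ω h1 h2 h3 h4
  have hfgκ : f =ᵐ[condExpKernel ν (coordSigma (A := A) F) ω] g :=
    measure_mono_null (fun η hη => subset_toMeasurable ν _ hη) h4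
  have hbind : gibbsUpdate 𝒢 Λ (condExpKernel ν (coordSigma (A := A) F) ω) = (condExpKernel ν (coordSigma (A := A) F) ω).bind g := by
    show ((condExpKernel ν (coordSigma (A := A) F) ω : Measure (∀ v, A v)).map f).join
      = ((condExpKernel ν (coordSigma (A := A) F) ω : Measure (∀ v, A v)).map g).join
    rw [Measure.map_congr hfgκ]
  rw [hbind, Measure.bind_apply hs hgm.aemeasurable]
  have e1 : ∫⁻ η, g η s ∂(condExpKernel ν (coordSigma (A := A) F) ω)
      = ∫⁻ η, ENNReal.ofReal (h η) ∂(condExpKernel ν (coordSigma (A := A) F) ω) := by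
    refine lintegral_congr_ae ?_
    filter_upwards [hfgκ] with η hη
    rw [← hη]
    simp only [hh_def]
    rw [ENNReal.ofReal_toReal ((hfle η s).trans_lt ENNReal.one_lt_top).ne]
  have hh_intκ : Integrable h (condExpKernel ν (coordSigma (A := A) F) ω) := by
    refine (integrable_const (1:ℝ)).mono' ?_ (ae_of_all _ hh_bd)
    refine hgsm.aestronglyMeasurable.congr ?_
    filter_upwards [hfgκ] with η hη
    simp only [hh_def, hη]
  have e2 : ∫⁻ η, ENNReal.ofReal (h η) ∂(condExpKernel ν (coordSigma (A := A) F) ω)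
      = ENNReal.ofReal (∫ η, h η ∂(condExpKernel ν (coordSigma (A := A) F) ω)) :=
    (ofReal_integral_eq_lintegral_ofReal hh_intκ
      (ae_of_all _ fun η => ENNReal.toReal_nonneg)).symm
  rw [e1, e2]
  have e3 : ∫ η, h η ∂(condExpKernel ν (coordSigma (A := A) F) ω) = (condExpKernel ν (coordSigma (A := A) F) ω s).toReal := by
    exact h1.symm.trans (h3.symm.trans h2.symm)
  rw [e3, ENNReal.ofReal_toReal (measure_ne_top _ _)]

lemma part1_aux (ν : Measure (∀ v, A v)) [IsProbabilityMeasure ν] (F : Set V) :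
    ∀ᵐ ω ∂ν, ∀ᵐ t ∂(condExpKernel ν (coordSigma (A := A) F) ω : Measure (∀ v, A v)),
      ∀ v ∈ F, t v = ω v := by
  have hm : coordSigma (A := A) F ≤ MeasurableSpace.pi := coordSigma_le (A := A) F
  haveI : IsFiniteMeasure (ν.trim hm) :=
    ⟨by rw [trim_measurableSet_eq hm MeasurableSet.univ]; exact measure_lt_top ν _⟩
  have key : ∀ v : V, ∀ᵐ ω ∂ν, v ∈ F →
      (condExpKernel ν (coordSigma (A := A) F) ω) {t : ∀ w, A w | t v = ω v} = 1 := by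
    intro v
    by_cases hv : v ∈ F
    swap
    · exact ae_of_all _ fun ω h => absurd h hv
    have hall : ∀ᵐ ω ∂ν, ∀ a : A v,
        ((condExpKernel ν (coordSigma (A := A) F) ω) {t : ∀ w, A w | t v = a}).toReal
          = Set.indicator {t : ∀ w, A w | t v = a} (fun _ => (1:ℝ)) ω := by
      rw [ae_all_iff]
      intro a
      have hsa : MeasurableSet[(coordSigma (A := A) F)] {t : ∀ w, A w | t v = a} := measurableSet_eval hv a
      have hsam : MeasurableSet {t : ∀ w, A w | t v = a} := hm _ hsa
      have h1 := condExpKernel_ae_eq_condExp (μ := ν) hm hsam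
      have h2 : (ν[Set.indicator {t : ∀ w, A w | t v = a} (fun _ => (1:ℝ)) | (coordSigma (A := A) F)])
          = Set.indicator {t : ∀ w, A w | t v = a} (fun _ => (1:ℝ)) :=
        condExp_of_stronglyMeasurable hm
          (stronglyMeasurable_const.indicator hsa)
          ((integrable_const (1:ℝ)).indicator hsam)
      filter_upwards [h1] with ω hω
      exact hω.trans (by rw [h2])
    filter_upwards [hall] with ω hω _
    have h3 := hω (ω v)
    rw [Set.indicator_of_mem (by simp : ω ∈ {t : ∀ w, A w | t v = ω v})] at h3
    exact (ENNReal.toReal_eq_one_iff _).mp h3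
  have keyall : ∀ᵐ ω ∂ν, ∀ v : V, v ∈ F →
      (condExpKernel ν (coordSigma (A := A) F) ω) {t : ∀ w, A w | t v = ω v} = 1 := ae_all_iff.mpr key
  filter_upwards [keyall] with ω hω
  rw [ae_all_iff]
  intro v
  by_cases hv : v ∈ F
  · have h1 := hω v hv
    have hsm : MeasurableSet {t : ∀ w, A w | t v = ω v} :=
      measurable_pi_apply v (measurableSet_singleton (ω v))
    have h0 : (condExpKernel ν (coordSigma (A := A) F) ω) {t : ∀ w, A w | t v = ω v}ᶜ = 0 := by
      rw [measure_compl hsm (measure_ne_top _ _), h1, measure_univ, tsub_self]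
    filter_upwards [measure_eq_zero_iff_ae_notMem.mp h0] with t ht _
    simpa using ht
  · exact ae_of_all _ fun t h => absurd h hv

lemma cylinders_countable : (measurableCylinders A).Countable := by
  unfold measurableCylinders
  exact Set.countable_iUnion fun s => Set.countable_iUnion fun S =>
    Set.countable_iUnion fun _ => Set.countable_singleton _

lemma measurableSet_of_mem_cylinders {t : Set (∀ v, A v)}
    (ht : t ∈ measurableCylinders A) : MeasurableSet t := by
  obtain ⟨s, S, hS, rfl⟩ := (mem_measurableCylinders t).mp ht
  exact hS.cylinder

end Aux

/-- If `ν` is a Gibbs measure for `𝒢` and `F ⊆ V`, then for `ν`-a.e. `ω` the conditional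
measure `ν|_ω^{ℬ(F)}` (disintegration along the σ-algebra of the coordinates in `F`) is a
Gibbs measure for the pinned structure `𝒢_{F,ω}`. -/
theorem stmt10 {V : Type*} [Countable V] {A : V → Type*} [∀ v, Fintype (A v)]
    [∀ v, Nonempty (A v)] [∀ v, MeasurableSpace (A v)] [∀ v, MeasurableSingletonClass (A v)]
    [StandardBorelSpace (∀ v, A v)]
    (𝒢 : GibbsStructure V A) (ν : Measure (∀ v, A v)) [IsProbabilityMeasure ν]
    (hν : IsGibbs 𝒢 ν) (F : Set V) :
    ∀ᵐ ω ∂ν, IsGibbsPinned 𝒢 F ω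
      (condExpKernel ν (coordSigma (A := A) F) ω : Measure (∀ v, A v)) := by
  have hpart1 := part1_aux (A := A) ν F
  have hpart2 : ∀ᵐ ω ∂ν, ∀ Λ : Finset V, (Λ : Set V) ⊆ Fᶜ →
      gibbsUpdate 𝒢 Λ (condExpKernel ν (coordSigma (A := A) F) ω) =
        condExpKernel ν (coordSigma (A := A) F) ω := by
    rw [ae_all_iff]
    intro Λ
    by_cases hΛ : (Λ : Set V) ⊆ Fᶜ
    swap
    · exact ae_of_all _ fun ω h => absurd h hΛ
    have hcyl : ∀ᵐ ω ∂ν, ∀ t ∈ measurableCylinders A,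
        gibbsUpdate 𝒢 Λ (condExpKernel ν (coordSigma (A := A) F) ω) t
          = condExpKernel ν (coordSigma (A := A) F) ω t := by
      rw [ae_ball_iff cylinders_countable]
      intro t ht
      exact key_cyl 𝒢 ν hν F hΛ (measurableSet_of_mem_cylinders ht)
    have huniv := key_cyl 𝒢 ν hν F hΛ (MeasurableSet.univ)
    filter_upwards [hcyl, huniv] with ω h1 h2 _
    haveI : IsFiniteMeasure
        (gibbsUpdate 𝒢 Λ (condExpKernel ν (coordSigma (A := A) F) ω)) :=
      ⟨by rw [h2]; exact measure_lt_top _ _⟩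
    exact ext_of_generate_finite _ generateFrom_measurableCylinders.symm
      isPiSystem_measurableCylinders h1 h2
  filter_upwards [hpart1, hpart2] with ω h1 h2
  exact ⟨h1, h2⟩


end
end

section
/- If a Gibbs structure 𝒢 satisfies the Dobrushin uniqueness condition (b* < 1), then for any ω ∈ Ω and any F ⊆ V, the pinned structure 𝒢_{F,ω} also satisfies the Dobrushin condition. -/
open MeasureTheory Real Filter Topology
open scoped ENNReal

noncomputable section
open scoped Classical

open GibbsStructure

variable {V : Type*} {A : V → Type*} [∀ v, Fintype (A v)] [∀ v, Nonempty (A v)]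
  [∀ v, MeasurableSpace (A v)] [∀ v, MeasurableSingletonClass (A v)]

/-- The Dobrushin interdependence coefficient `b_{v,u}` for the structure `𝒢` pinned on
`(F, pin)`: the supremum over pairs of admissible configurations agreeing off `u` of the
total variation distance `sup_{B,C} (μ₁(B) - μ₂(C)) - (μ₂(B) - μ₁(C))` between the `v`-th
marginals of the single-site kernels. -/
def dobCoef (𝒢 : GibbsStructure V A) (F : Set V) (pin : ∀ v, A v) (v u : V) : ℝ≥0∞ :=
  ⨆ p : {p : (∀ w, A w) × (∀ w, A w) // (∀ w, w ≠ u → p.1 w = p.2 w) ∧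
      (∀ w ∈ F, p.1 w = pin w) ∧ (∀ w ∈ F, p.2 w = pin w)},
    ⨆ B : Set (A v), ⨆ C : Set (A v),
      (((kernelMeasure 𝒢 F pin {v} p.1.1).map fun x => x v) B +
          ((kernelMeasure 𝒢 F pin {v} p.1.2).map fun x => x v) C) -
        (((kernelMeasure 𝒢 F pin {v} p.1.2).map fun x => x v) B +
          ((kernelMeasure 𝒢 F pin {v} p.1.1).map fun x => x v) C)

/-- The Dobrushin uniqueness condition `b* = sup_v ∑_{u ≠ v} b_{v,u} < 1` for the structure
`𝒢` pinned on `(F, pin)`. -/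
def DobrushinCond (𝒢 : GibbsStructure V A) (F : Set V) (pin : ∀ v, A v) : Prop :=
  (⨆ v : V, ∑' u : {u : V // u ≠ v}, dobCoef 𝒢 F pin v ↑u) < 1

lemma aux_kernel_pin_mem (𝒢 : GibbsStructure V A) {F : Set V} {ω : ∀ v, A v} {v : V}
    (hv : v ∈ F) {η : ∀ w, A w} (hη : ∀ w ∈ F, η w = ω w) :
    (kernelMeasure 𝒢 F ω {v} η).map (fun x => x v) = Measure.dirac (ω v) := by
  set τ₀ : ∀ w : ({v} : Finset V), A ↑w := fun w => ω ↑w with hτ₀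
  set e : ℝ := Real.exp (-(energy 𝒢 {v} (paste {v} η τ₀))) with he
  have hW : ∀ τ : ∀ w : ({v} : Finset V), A ↑w,
      pinWeight 𝒢 F ω {v} η τ = if τ = τ₀ then e else 0 := by
    intro τ
    unfold pinWeight
    by_cases hc : ∀ w ∈ F, paste {v} η τ w = ω w
    · have hτ : τ = τ₀ := by
        funext w
        have hw : w = ⟨v, Finset.mem_singleton_self v⟩ :=
          Subtype.ext (Finset.mem_singleton.mp w.2)
        rw [hw]
        have := hc v hv
        simpa [paste, hτ₀] using this
      rw [if_pos hc, if_pos hτ, hτ, he]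
    · have hτ : τ ≠ τ₀ := by
        intro hτ; apply hc
        intro w hw
        subst hτ
        by_cases hwv : w = v
        · subst hwv; simp [paste, hτ₀]
        · simp only [paste]
          rw [dif_neg (by simpa [Finset.mem_singleton] using hwv)]
          exact hη w hw
      rw [if_neg hc, if_neg hτ]
  have hsum : (∑ τ' : ∀ w : ({v} : Finset V), A ↑w, pinWeight 𝒢 F ω {v} η τ') = e := by
    simp [hW]
  have hkm : kernelMeasure 𝒢 F ω {v} η = Measure.dirac (paste {v} η τ₀) := by
    unfold kernelMeasure
    rw [Fintype.sum_eq_single τ₀]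
    · rw [hW, if_pos rfl, hsum, div_self (ne_of_gt (Real.exp_pos _)), ENNReal.ofReal_one,
        one_smul]
    · intro τ hτ
      rw [hW, if_neg hτ, hsum, zero_div, ENNReal.ofReal_zero, zero_smul]
  rw [hkm, Measure.map_dirac' (measurable_pi_apply v)]
  have : paste {v} η τ₀ v = ω v := by simp [paste, hτ₀]
  rw [this]

lemma aux_kernel_pin_not_mem (𝒢 : GibbsStructure V A) {F : Set V} {ω : ∀ v, A v}
    (ω₀ : ∀ v, A v) {v : V} (hv : v ∉ F) {η : ∀ w, A w} (hη : ∀ w ∈ F, η w = ω w) :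
    kernelMeasure 𝒢 F ω {v} η = kernelMeasure 𝒢 ∅ ω₀ {v} η := by
  have hW : ∀ τ : ∀ w : ({v} : Finset V), A ↑w,
      pinWeight 𝒢 F ω {v} η τ = pinWeight 𝒢 ∅ ω₀ {v} η τ := by
    intro τ
    unfold pinWeight
    rw [if_pos, if_pos]
    · intro w hw
      exact absurd hw (Set.notMem_empty w)
    · intro w hw
      have hwv : w ≠ v := fun hwv => hv (hwv ▸ hw)
      simp only [paste]
      rw [dif_neg (by simpa [Finset.mem_singleton] using hwv)]
      exact hη w hw
  unfold kernelMeasure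
  simp only [hW]

lemma aux_dobCoef_le (𝒢 : GibbsStructure V A) (ω₀ : ∀ v, A v) (F : Set V) (ω : ∀ v, A v)
    (v u : V) : dobCoef 𝒢 F ω v u ≤ dobCoef 𝒢 ∅ ω₀ v u := by
  refine iSup_le fun p => ?_
  obtain ⟨⟨η₁, η₂⟩, hagree, h1, h2⟩ := p
  by_cases hv : v ∈ F
  · have e1 := aux_kernel_pin_mem 𝒢 hv h1
    have e2 := aux_kernel_pin_mem 𝒢 hv h2
    simp only [e1, e2]
    exact iSup_le fun B => iSup_le fun C => by rw [tsub_self]; exact zero_le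
  by_cases hu : u ∈ F
  · have hη : η₁ = η₂ := by
      funext w
      by_cases hw : w = u
      · subst hw; exact (h1 w hu).trans (h2 w hu).symm
      · exact hagree w hw
    simp only [hη]
    exact iSup_le fun B => iSup_le fun C => by rw [tsub_self]; exact zero_le
  · simp only [aux_kernel_pin_not_mem 𝒢 ω₀ hv h1, aux_kernel_pin_not_mem 𝒢 ω₀ hv h2]
    exact le_iSup_of_le
      ⟨(η₁, η₂), hagree, fun w hw => absurd hw (Set.notMem_empty w),
        fun w hw => absurd hw (Set.notMem_empty w)⟩ le_rfl

/-- If a Gibbs structure satisfies the Dobrushin uniqueness condition `b* < 1`, then every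
pinned structure `𝒢_{F,ω}` satisfies the Dobrushin condition as well. -/
theorem stmt15 [Countable V] (𝒢 : GibbsStructure V A) (ω₀ : ∀ v, A v)
    (h : DobrushinCond 𝒢 ∅ ω₀) :
    ∀ (F : Set V) (ω : ∀ v, A v), DobrushinCond 𝒢 F ω := by
  intro F ω
  refine lt_of_le_of_lt ?_ h
  exact iSup_mono fun v =>
    ENNReal.tsum_le_tsum fun u => aux_dobCoef_le 𝒢 ω₀ F ω v ↑u

end
end
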